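/- Let A ⊆ Sym(Ω), |Ω| = n, ρ ∈ (0,1), and let Σ = {α₁,…,α_k} ⊆ Ω be such that for every 1 ≤ j ≤ k the orbit of α_j under A_{(α₁,…,α_{j−1})} has at least ρn elements. Then the restriction to Σ of the setwise stabilizer (A^{−k}A^{k})_Σ contains at least ρ^k · k! distinct permutations of Σ. -/

import Mathlib

open Pointwise

theorem stmt_19 {Ω : Type*} [Fintype Ω] [DecidableEq Ω] (n : ℕ) (hn : Fintype.card Ω = n)
    (A : Finset (Equiv.Perm Ω)) (ρ : ℝ) (hρ : ρ ∈ Set.Ioo (0 : ℝ) 1)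
    (k : ℕ) (α : Fin k → Ω) (hα : Function.Injective α)
    (horb : ∀ j : Fin k,
      ρ * n ≤ (((A.filter fun g => ∀ i : Fin k, i < j → g (α i) = α i).image
        fun g => g (α j)).card : ℝ)) :
    ρ ^ k * (Nat.factorial k : ℝ) ≤
      (((((A ^ k)⁻¹ * A ^ k).filter fun g =>
          Finset.image (fun x => g x) (Finset.image α Finset.univ) = Finset.image α Finset.univ).image
        fun g => fun i : Fin k => g (α i)).card : ℝ) := by
  classical
  obtain ⟨hρ0, hρ1⟩ := hρ
  have hρn : (0:ℝ) ≤ ρ * n := by positivity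
  -- Step 1: the number of distinct tuples (g α₁, ..., g α_m) for g ∈ A^m is at least (ρn)^m.
  have key : ∀ m, ∀ hm : m ≤ k, (ρ * n) ^ m ≤
      (((A ^ m).image fun g => fun i : Fin m => g (α (Fin.castLE hm i))).card : ℝ) := by
    intro m
    induction m with
    | zero => intro hm; simp
    | succ m ih =>
      intro hm
      have hm' : m ≤ k := le_trans (Nat.le_succ m) hm
      have hmk : m < k := hm
      set j : Fin k := ⟨m, hmk⟩ with hj
      set S := A.filter fun g => ∀ i : Fin k, i < j → g (α i) = α i with hSdef
      set Orb := S.image fun g => g (α j) with hOrbdef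
      set Tm := (A ^ m).image (fun g => fun i : Fin m => g (α (Fin.castLE hm' i))) with hTmdef
      set Tm1 := (A ^ (m+1)).image (fun g => fun i : Fin (m+1) => g (α (Fin.castLE hm i)))
        with hTm1def
      -- representative choice
      set G : (Fin m → Ω) → Equiv.Perm Ω := fun t =>
        if h : ∃ g, g ∈ A ^ m ∧ (fun i : Fin m => g (α (Fin.castLE hm' i))) = t then
          h.choose else 1 with hGdef
      have hG : ∀ t ∈ Tm, G t ∈ A ^ m ∧
          (fun i : Fin m => G t (α (Fin.castLE hm' i))) = t := by
        intro t ht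
        rw [hTmdef, Finset.mem_image] at ht
        obtain ⟨g, hg, hgt⟩ := ht
        have hex : ∃ g, g ∈ A ^ m ∧ (fun i : Fin m => g (α (Fin.castLE hm' i))) = t :=
          ⟨g, hg, hgt⟩
        rw [hGdef]; simp only [dif_pos hex]
        exact hex.choose_spec
      -- injection from Tm ×ˢ Orb into Tm1
      have card_le : Tm.card * Orb.card ≤ Tm1.card := by
        rw [← Finset.card_product]
        apply Finset.card_le_card_of_injOn
          (fun p => Fin.snoc p.1 (G p.1 p.2) : (Fin m → Ω) × Ω → Fin (m+1) → Ω)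
        · rintro ⟨t, β⟩ hp
          rw [Finset.mem_coe, Finset.mem_product] at hp
          obtain ⟨ht, hβ⟩ := hp
          obtain ⟨hGA, hGt⟩ := hG t ht
          rw [hOrbdef, Finset.mem_image] at hβ
          obtain ⟨a, ha, haβ⟩ := hβ
          rw [hSdef, Finset.mem_filter] at ha
          obtain ⟨haA, hafix⟩ := ha
          rw [Finset.mem_coe, hTm1def, Finset.mem_image]
          refine ⟨G t * a, ?_, ?_⟩
          · rw [pow_succ]; exact Finset.mul_mem_mul hGA haA
          · funext i
            refine Fin.lastCases ?_ ?_ i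
            · have hcast : Fin.castLE hm (Fin.last m) = j := by
                apply Fin.ext; rfl
              simp only [hcast, Equiv.Perm.mul_apply, haβ, Fin.snoc_last]
            · intro i0
              have hcast : Fin.castLE hm (Fin.castSucc i0) = Fin.castLE hm' i0 := by
                apply Fin.ext; rfl
              have hlt : Fin.castLE hm' i0 < j := by
                simp only [Fin.lt_def]; exact i0.2
              have hfix := hafix (Fin.castLE hm' i0) hlt
              simp only [hcast, Equiv.Perm.mul_apply, hfix, Fin.snoc_castSucc]
              exact congrFun hGt i0
        · rintro ⟨t, β⟩ hp ⟨t', β'⟩ hp' heq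
          simp only [Set.mem_setOf_eq] at heq
          have ht_eq : t = t' := by
            funext i0
            have := congrFun heq (Fin.castSucc i0)
            simpa [Fin.snoc_castSucc] using this
          subst ht_eq
          have hβ : G t β = G t β' := by
            have := congrFun heq (Fin.last m)
            simpa [Fin.snoc_last] using this
          have : β = β' := (G t).injective hβ
          simp [this]
      have horbj := horb j
      calc (ρ * n) ^ (m+1) = (ρ * n) ^ m * (ρ * n) := by ring
        _ ≤ (Tm.card : ℝ) * (Orb.card : ℝ) := by
            apply mul_le_mul (ih hm') horbj hρn (Nat.cast_nonneg _)
        _ = ((Tm.card * Orb.card : ℕ) : ℝ) := by push_cast; ring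
        _ ≤ (Tm1.card : ℝ) := by exact_mod_cast card_le
  -- main sets
  set Sig := Finset.image α Finset.univ with hSigdef
  set T := (A ^ k).image (fun g => fun i : Fin k => g (α i)) with hTdef
  set R := ((((A ^ k)⁻¹ * A ^ k).filter fun g =>
      Finset.image (fun x => g x) Sig = Sig).image fun g => fun i : Fin k => g (α i)) with hRdef
  have hT : (ρ * n) ^ k ≤ (T.card : ℝ) := by
    have := key k le_rfl
    simpa [hTdef] using this
  -- Step 2: fibers of the "underlying set" map inject into R
  have fiber_le : ∀ S ∈ T.image (fun t => Finset.image t Finset.univ),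
      (T.filter fun t => Finset.image t Finset.univ = S).card ≤ R.card := by
    intro S hS
    rw [Finset.mem_image] at hS
    obtain ⟨th, hth, hthS⟩ := hS
    rw [hTdef, Finset.mem_image] at hth
    obtain ⟨h, hhA, hht⟩ := hth
    apply Finset.card_le_card_of_injOn (fun t => fun i : Fin k => h⁻¹ (t i))
    · intro t ht
      rw [Finset.mem_coe, Finset.mem_filter] at ht
      obtain ⟨htT, htS⟩ := ht
      rw [hTdef, Finset.mem_image] at htT
      obtain ⟨g, hgA, hgt⟩ := htT
      rw [Finset.mem_coe, hRdef, Finset.mem_image]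
      refine ⟨h⁻¹ * g, ?_, ?_⟩
      · rw [Finset.mem_filter]
        constructor
        · exact Finset.mul_mem_mul (Finset.inv_mem_inv hhA) hgA
        · have himg_g : Finset.image (fun x => g x) Sig = S := by
            rw [hSigdef, Finset.image_image]
            rw [← htS, ← hgt]
            rfl
          have himg_h : Finset.image (fun x => h x) Sig = S := by
            rw [hSigdef, Finset.image_image]
            rw [← hthS, ← hht]
            rfl
          have : Finset.image (fun x => (h⁻¹ * g) x) Sig =
              Finset.image (fun x => h⁻¹ x) (Finset.image (fun x => g x) Sig) := by
            simp only [Finset.image_image]; rfl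
          rw [this, himg_g, ← himg_h, Finset.image_image]
          have : ((fun x => h⁻¹ x) ∘ fun x => h x) = id := by
            funext x; simp
          rw [this, Finset.image_id]
      · funext i
        simp only [Equiv.Perm.mul_apply]
        rw [← hgt]
    · intro t ht t' ht' heq
      funext i
      have := congrFun heq i
      exact h⁻¹.injective this
  have hTR : T.card ≤ R.card * (T.image (fun t => Finset.image t Finset.univ)).card :=
    Finset.card_le_mul_card_image T R.card fiber_le
  -- the image of the set map has at most C(n,k) elements
  have hB : (T.image (fun t => Finset.image t Finset.univ)).card ≤ n.choose k := by
    have hsub : T.image (fun t => Finset.image t Finset.univ) ⊆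
        Finset.powersetCard k Finset.univ := by
      intro S hS
      rw [Finset.mem_image] at hS
      obtain ⟨t, ht, htS⟩ := hS
      rw [hTdef, Finset.mem_image] at ht
      obtain ⟨g, hgA, hgt⟩ := ht
      rw [Finset.mem_powersetCard]
      constructor
      · exact Finset.subset_univ _
      · rw [← htS, ← hgt]
        have hinj : Function.Injective (fun i : Fin k => g (α i)) :=
          fun i i' hii => hα (g.injective hii)
        rw [Finset.card_image_of_injective _ hinj, Finset.card_univ, Fintype.card_fin]
    calc (T.image (fun t => Finset.image t Finset.univ)).card
        ≤ (Finset.powersetCard k (Finset.univ : Finset Ω)).card := Finset.card_le_card hsub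
      _ = n.choose k := by rw [Finset.card_powersetCard, Finset.card_univ, hn]
  -- arithmetic
  have hkn : k ≤ n := by
    rw [← hn, ← Fintype.card_fin k]
    exact Fintype.card_le_of_injective α hα
  have hCpos : (0:ℝ) < (n.choose k : ℝ) := by
    exact_mod_cast Nat.choose_pos hkn
  have hfact : (k.factorial * n.choose k : ℕ) ≤ n ^ k := by
    rw [← Nat.descFactorial_eq_factorial_mul_choose]
    exact Nat.descFactorial_le_pow n k
  apply le_of_mul_le_mul_right _ hCpos
  calc ρ ^ k * (Nat.factorial k : ℝ) * (n.choose k : ℝ)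
      = ρ ^ k * ((k.factorial * n.choose k : ℕ) : ℝ) := by push_cast; ring
    _ ≤ ρ ^ k * ((n ^ k : ℕ) : ℝ) := by
        apply mul_le_mul_of_nonneg_left _ (by positivity)
        exact_mod_cast hfact
    _ = (ρ * n) ^ k := by push_cast; ring
    _ ≤ (T.card : ℝ) := hT
    _ ≤ (R.card : ℝ) * (n.choose k : ℝ) := by
        calc (T.card : ℝ) ≤ ((R.card *
              (T.image (fun t => Finset.image t Finset.univ)).card : ℕ) : ℝ) := by
              exact_mod_cast hTR
          _ ≤ (R.card : ℝ) * (n.choose k : ℝ) := by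
              push_cast
              apply mul_le_mul_of_nonneg_left _ (Nat.cast_nonneg _)
              exact_mod_cast hB
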